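/- The series Σ_{n=1}^∞ E[exp(−[S_n]^+)] converges (i.e. there is a finite constant a_3 with Σ_{n=1}^∞ E[exp(−[S_n]^+)] ≤ a_3). -/

import Mathlib

open MeasureTheory ProbabilityTheory

/-- Output marginal `P_Y(y) = Σ_x P_X(x) W(y|x)`. -/
noncomputable def outDist {𝒳 𝒴 : Type*} [Fintype 𝒳] (pX : 𝒳 → ℝ) (W : 𝒳 → 𝒴 → ℝ)
    (y : 𝒴) : ℝ := ∑ x, pX x * W x y

/-- Information density `i(x;y) = log (W(y|x) / P_Y(y))`. -/
noncomputable def infoDen {𝒳 𝒴 : Type*} [Fintype 𝒳] (pX : 𝒳 → ℝ) (W : 𝒳 → 𝒴 → ℝ)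
    (x : 𝒳) (y : 𝒴) : ℝ := Real.log (W x y / outDist pX W y)

private lemma exp_half_log {x : ℝ} (hx : 0 < x) :
    Real.exp (Real.log x / 2) = Real.sqrt x := by
  rw [← Real.log_sqrt hx.le, Real.exp_log (Real.sqrt_pos.2 hx)]

private lemma sqrt_mul_le_half {a b : ℝ} (ha : 0 ≤ a) (hb : 0 ≤ b) :
    Real.sqrt (a * b) ≤ (a + b) / 2 := by
  rw [Real.sqrt_mul ha]
  nlinarith [sq_nonneg (Real.sqrt a - Real.sqrt b), Real.sq_sqrt ha, Real.sq_sqrt hb]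

private lemma sqrt_mul_lt_half {a b : ℝ} (ha : 0 ≤ a) (hb : 0 ≤ b) (hab : a ≠ b) :
    Real.sqrt (a * b) < (a + b) / 2 := by
  have hne : Real.sqrt a ≠ Real.sqrt b := fun h => hab ((Real.sqrt_inj ha hb).1 h)
  have h2 : 0 < (Real.sqrt a - Real.sqrt b) ^ 2 :=
    lt_of_le_of_ne (sq_nonneg _) (Ne.symm (pow_ne_zero 2 (sub_ne_zero.2 hne)))
  rw [Real.sqrt_mul ha]
  nlinarith [Real.sq_sqrt ha, Real.sq_sqrt hb]

/-- The series `Σ_{n≥1} E[exp(−[Sₙ]⁺)]` converges, i.e. there is a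
finite constant `a₃` with `Σ_{n=1}^∞ E[exp(−[Sₙ]⁺)] ≤ a₃`. -/
theorem stmt6 {𝒳 𝒴 : Type*} [Fintype 𝒳] [Nonempty 𝒳] [Fintype 𝒴] [Nonempty 𝒴]
    [MeasurableSpace 𝒳] [DiscreteMeasurableSpace 𝒳]
    [MeasurableSpace 𝒴] [DiscreteMeasurableSpace 𝒴]
    (pX : 𝒳 → ℝ) (hpXpos : ∀ x, 0 < pX x) (hpXsum : ∑ x, pX x = 1)
    (W : 𝒳 → 𝒴 → ℝ) (hWpos : ∀ x y, 0 < W x y) (hWsum : ∀ x, ∑ y, W x y = 1)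
    -- `P_{XY} ≠ P_X ⊗ P_Y`, equivalently `C = E[i(X₁;Y₁)] > 0`:
    (hC : 0 < ∑ x, ∑ y, pX x * W x y * infoDen pX W x y)
    {Ω : Type*} [MeasurableSpace Ω] (μ : Measure Ω) [IsProbabilityMeasure μ]
    (X : ℕ → Ω → 𝒳) (Y : ℕ → Ω → 𝒴)
    (hXm : ∀ k, Measurable (X k)) (hYm : ∀ k, Measurable (Y k))
    -- `((X_k, Y_k))_k` is an i.i.d. sequence with law `P_{XY}`:
    (hXYindep : iIndepFun (fun k ω => (X k ω, Y k ω)) μ)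
    (hXYlaw : ∀ k x y, μ {ω | X k ω = x ∧ Y k ω = y} = ENNReal.ofReal (pX x * W x y)) :
    ∃ a₃ : ℝ,
      Summable (fun n : ℕ =>
        ∫ ω, Real.exp (-(max (∑ k ∈ Finset.range (n + 1), infoDen pX W (X k ω) (Y k ω)) 0)) ∂μ)
      ∧ ∑' n : ℕ,
          (∫ ω, Real.exp
            (-(max (∑ k ∈ Finset.range (n + 1), infoDen pX W (X k ω) (Y k ω)) 0)) ∂μ) ≤ a₃ := by
  classical
  set P : 𝒴 → ℝ := outDist pX W with hPdef
  have hPpos : ∀ y, 0 < P y := fun y =>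
    Finset.sum_pos (fun x _ => mul_pos (hpXpos x) (hWpos x y)) Finset.univ_nonempty
  have hPsum : ∑ y, P y = 1 := by
    simp only [hPdef, outDist]
    rw [Finset.sum_comm]
    simp only [← Finset.mul_sum, hWsum, mul_one, hpXsum]
  -- there is a pair where `W ≠ P`
  have hne : ∃ x y, W x y ≠ P y := by
    by_contra h
    push_neg at h
    have hz : ∀ x y, infoDen pX W x y = 0 := fun x y => by
      simp [infoDen, ← hPdef, h x y, div_self (hPpos y).ne']
    simp only [hz, mul_zero, Finset.sum_const_zero, lt_self_iff_false] at hC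
  obtain ⟨x0, y0, hx0⟩ := hne
  set t : ℝ := -(1 / 2) with htdef
  set ρ : ℝ := ∑ x, ∑ y, pX x * W x y * Real.exp (t * infoDen pX W x y) with hρdef
  have hterm : ∀ x y, W x y * Real.exp (t * infoDen pX W x y) = Real.sqrt (W x y * P y) := by
    intro x y
    have hW := hWpos x y
    have hP := hPpos y
    have h1 : t * infoDen pX W x y = Real.log (P y / W x y) / 2 := by
      simp only [infoDen, ← hPdef, Real.log_div hW.ne' hP.ne', Real.log_div hP.ne' hW.ne', htdef]
      ring
    rw [h1, exp_half_log (div_pos hP hW),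
      show W x y * P y = (W x y) ^ 2 * (P y / W x y) by field_simp,
      Real.sqrt_mul (sq_nonneg _), Real.sqrt_sq hW.le]
  have hρ_eq : ρ = ∑ x, pX x * ∑ y, Real.sqrt (W x y * P y) := by
    rw [hρdef]
    refine Finset.sum_congr rfl fun x _ => ?_
    rw [Finset.mul_sum]
    exact Finset.sum_congr rfl fun y _ => by rw [mul_assoc, hterm]
  have hhalf : ∀ x, ∑ y, (W x y + P y) / 2 = 1 := by
    intro x
    rw [← Finset.sum_div, Finset.sum_add_distrib, hWsum x, hPsum]
    norm_num
  have hs_le : ∀ x, ∑ y, Real.sqrt (W x y * P y) ≤ 1 := by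
    intro x
    calc ∑ y, Real.sqrt (W x y * P y) ≤ ∑ y, (W x y + P y) / 2 :=
          Finset.sum_le_sum fun y _ => sqrt_mul_le_half (hWpos x y).le (hPpos y).le
      _ = 1 := hhalf x
  have hs_lt : ∑ y, Real.sqrt (W x0 y * P y) < 1 := by
    calc ∑ y, Real.sqrt (W x0 y * P y) < ∑ y, (W x0 y + P y) / 2 :=
          Finset.sum_lt_sum (fun y _ => sqrt_mul_le_half (hWpos x0 y).le (hPpos y).le)
            ⟨y0, Finset.mem_univ _, sqrt_mul_lt_half (hWpos x0 y0).le (hPpos y0).le hx0⟩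
      _ = 1 := hhalf x0
  have hρ0 : 0 ≤ ρ := by
    rw [hρdef]
    refine Finset.sum_nonneg fun x _ => Finset.sum_nonneg fun y _ => ?_
    exact mul_nonneg (mul_nonneg (hpXpos x).le (hWpos x y).le) (Real.exp_pos _).le
  have hρlt : ρ < 1 := by
    calc ρ = ∑ x, pX x * ∑ y, Real.sqrt (W x y * P y) := hρ_eq
      _ < ∑ x, pX x * 1 :=
          Finset.sum_lt_sum (fun x _ => mul_le_mul_of_nonneg_left (hs_le x) (hpXpos x).le)
            ⟨x0, Finset.mem_univ _, mul_lt_mul_of_pos_left hs_lt (hpXpos x0)⟩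
      _ = 1 := by simp [hpXsum]
  -- random variables
  set Z : ℕ → Ω → ℝ := fun k ω => infoDen pX W (X k ω) (Y k ω) with hZdef
  have hpairm : ∀ k, Measurable (fun ω => (X k ω, Y k ω)) := fun k => (hXm k).prodMk (hYm k)
  have hZm : ∀ k, Measurable (Z k) := fun k =>
    (measurable_of_countable (fun p : 𝒳 × 𝒴 => infoDen pX W p.1 p.2)).comp (hpairm k)
  have hZindep : iIndepFun Z μ :=
    hXYindep.comp (fun _ p => infoDen pX W p.1 p.2) fun _ => measurable_of_countable _
  have hmgf : ∀ k, mgf (Z k) μ t = ρ := by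
    intro k
    have hmap : ∀ z : 𝒳 × 𝒴,
        (Measure.map (fun ω => (X k ω, Y k ω)) μ) {z} = ENNReal.ofReal (pX z.1 * W z.1 z.2) := by
      rintro ⟨x, y⟩
      rw [Measure.map_apply (hpairm k) (measurableSet_singleton _)]
      have hpre : (fun ω => (X k ω, Y k ω)) ⁻¹' {(x, y)} = {ω | X k ω = x ∧ Y k ω = y} := by
        ext ω; simp [Prod.ext_iff]
      rw [hpre, hXYlaw k x y]
    haveI : IsProbabilityMeasure (Measure.map (fun ω => (X k ω, Y k ω)) μ) :=
      Measure.isProbabilityMeasure_map (hpairm k).aemeasurable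
    calc mgf (Z k) μ t
        = ∫ z : 𝒳 × 𝒴, Real.exp (t * infoDen pX W z.1 z.2)
            ∂(Measure.map (fun ω => (X k ω, Y k ω)) μ) :=
          (integral_map (f := fun z : 𝒳 × 𝒴 => Real.exp (t * infoDen pX W z.1 z.2))
            (hpairm k).aemeasurable
            (measurable_of_countable _).aestronglyMeasurable).symm
      _ = ∑ z : 𝒳 × 𝒴, ((Measure.map (fun ω => (X k ω, Y k ω)) μ) {z}).toReal
            • Real.exp (t * infoDen pX W z.1 z.2) := integral_fintype .of_finite
      _ = ρ := by
          rw [hρdef, Fintype.sum_prod_type]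
          refine Finset.sum_congr rfl fun x _ => Finset.sum_congr rfl fun y _ => ?_
          rw [hmap (x, y),
            ENNReal.toReal_ofReal (mul_nonneg (hpXpos x).le (hWpos x y).le), smul_eq_mul]
  have hintZ : ∀ k, Integrable (fun ω => Real.exp (t * Z k ω)) μ := by
    intro k
    haveI : IsProbabilityMeasure (Measure.map (fun ω => (X k ω, Y k ω)) μ) :=
      Measure.isProbabilityMeasure_map (hpairm k).aemeasurable
    have := (integrable_map_measure
      (g := fun z : 𝒳 × 𝒴 => Real.exp (t * infoDen pX W z.1 z.2))
      (measurable_of_countable _).aestronglyMeasurable (hpairm k).aemeasurable).1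
      (Integrable.of_finite (μ := Measure.map (fun ω => (X k ω, Y k ω)) μ))
    exact this
  have hintR : ∀ n : ℕ,
      Integrable (fun ω => Real.exp (t * ∑ k ∈ Finset.range (n + 1), Z k ω)) μ := by
    intro n
    have h := hZindep.integrable_exp_mul_sum (t := t) hZm
      (s := Finset.range (n + 1)) fun k _ => hintZ k
    simpa [Finset.sum_apply] using h
  have hmgfS : ∀ n : ℕ,
      ∫ ω, Real.exp (t * ∑ k ∈ Finset.range (n + 1), Z k ω) ∂μ = ρ ^ (n + 1) := by
    intro n
    have h := hZindep.mgf_sum (t := t) hZm (Finset.range (n + 1))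
    simp only [hmgf, Finset.prod_const, Finset.card_range] at h
    simp only [mgf, Finset.sum_apply] at h
    exact h
  have hSm : ∀ n : ℕ, Measurable (fun ω => ∑ k ∈ Finset.range (n + 1), Z k ω) := fun n =>
    Finset.measurable_sum _ fun k _ => hZm k
  have hle : ∀ (n : ℕ) (ω : Ω),
      Real.exp (-(max (∑ k ∈ Finset.range (n + 1), Z k ω) 0))
        ≤ Real.exp (t * ∑ k ∈ Finset.range (n + 1), Z k ω) := by
    intro n ω
    apply Real.exp_le_exp.2
    set s := ∑ k ∈ Finset.range (n + 1), Z k ω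
    rcases le_total s 0 with h | h
    · rw [max_eq_right h, htdef]; linarith
    · rw [max_eq_left h, htdef]; linarith
  have hintL : ∀ n : ℕ,
      Integrable (fun ω => Real.exp (-(max (∑ k ∈ Finset.range (n + 1), Z k ω) 0))) μ := by
    intro n
    refine (hintR n).mono ?_ ?_
    · exact (((hSm n).max measurable_const).neg.exp).aestronglyMeasurable
    · refine Filter.Eventually.of_forall fun ω => ?_
      rw [Real.norm_eq_abs, Real.norm_eq_abs, Real.abs_exp, Real.abs_exp]
      exact hle n ω
  have hInt_le : ∀ n : ℕ,
      ∫ ω, Real.exp (-(max (∑ k ∈ Finset.range (n + 1), Z k ω) 0)) ∂μ ≤ ρ ^ (n + 1) := by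
    intro n
    exact (integral_mono (hintL n) (hintR n) fun ω => hle n ω).trans_eq (hmgfS n)
  have hInt_nonneg : ∀ n : ℕ,
      0 ≤ ∫ ω, Real.exp (-(max (∑ k ∈ Finset.range (n + 1), Z k ω) 0)) ∂μ := fun n =>
    integral_nonneg fun ω => (Real.exp_pos _).le
  have hgeom : Summable fun n : ℕ => ρ ^ (n + 1) := by
    have h := (summable_geometric_of_lt_one hρ0 hρlt).mul_right ρ
    simpa [pow_succ] using h
  refine ⟨∑' n : ℕ, ρ ^ (n + 1), ?_, ?_⟩
  · exact Summable.of_nonneg_of_le hInt_nonneg hInt_le hgeom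
  · exact Summable.tsum_le_tsum hInt_le (Summable.of_nonneg_of_le hInt_nonneg hInt_le hgeom) hgeom
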